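/- If T is consistent and there exists a Σ3 sentence σ that is T-provable but false in ℕ, then T has a false Gödelian sentence of complexity Σ3 (even if T is ω-consistent). -/

import Mathlib

/-- An abstract propositional-logical syntax for sentences of arithmetic. -/
structure PropLang where
  Sent : Type
  falsum : Sent
  neg : Sent → Sent
  imp : Sent → Sent → Sent
  conj : Sent → Sent → Sent
  disj : Sent → Sent → Sent
  iffS : Sent → Sent → Sent

namespace PropLang

/-- A valuation (e.g. truth in the standard model ℕ) commuting with the connectives. -/
def IsValuation (L : PropLang) (v : L.Sent → Prop) : Prop :=
  (¬ v L.falsum) ∧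
  (∀ a, v (L.neg a) ↔ ¬ v a) ∧
  (∀ a b, v (L.imp a b) ↔ (v a → v b)) ∧
  (∀ a b, v (L.conj a b) ↔ (v a ∧ v b)) ∧
  (∀ a b, v (L.disj a b) ↔ (v a ∨ v b)) ∧
  (∀ a b, v (L.iffS a b) ↔ (v a ↔ v b))

/-- Propositional tautologies: sentences true under every valuation. -/
def Taut (L : PropLang) (s : L.Sent) : Prop :=
  ∀ v : L.Sent → Prop, L.IsValuation v → v s

end PropLang

/-- A (recursively axiomatized) theory together with its provability
predicate `Pr`; `Pr σ` denotes the sentence `Pr_T(#σ)`. -/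
structure TheoryOn (L : PropLang) where
  Prv : L.Sent → Prop
  Pr : L.Sent → L.Sent

namespace TheoryOn

variable {L : PropLang}

/-- `T` is closed under classical propositional logic. -/
def ClosedUnderLogic (T : TheoryOn L) : Prop :=
  (∀ s, L.Taut s → T.Prv s) ∧
  (∀ a b, T.Prv (L.imp a b) → T.Prv a → T.Prv b)

/-- Consistency of `T`. -/
def Consistent (T : TheoryOn L) : Prop :=
  ¬ ∃ s, T.Prv s ∧ T.Prv (L.neg s)

/-- Soundness of `T` with respect to truth in the standard model. -/
def Sound (T : TheoryOn L) (TrN : L.Sent → Prop) : Prop :=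
  ∀ s, T.Prv s → TrN s

/-- `γ` is a Gödelian sentence of `T`: `T ⊢ γ ↔ ¬Pr_T(#γ)`. -/
def Godelian (T : TheoryOn L) (γ : L.Sent) : Prop :=
  T.Prv (L.iffS γ (L.neg (T.Pr γ)))

/-- The Hilbert–Bernays–Löb derivability conditions for `Pr_T`. -/
def HBL (T : TheoryOn L) : Prop :=
  (∀ s, T.Prv s → T.Prv (T.Pr s)) ∧
  (∀ a b, T.Prv (L.imp (T.Pr (L.imp a b)) (L.imp (T.Pr a) (T.Pr b)))) ∧
  (∀ s, T.Prv (L.imp (T.Pr s) (T.Pr (T.Pr s))))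

/-- `Pr_T` is a standard provability predicate:
`ℕ ⊨ Pr_T(#σ)` iff `T ⊢ σ`. -/
def PrStandard (T : TheoryOn L) (TrN : L.Sent → Prop) : Prop :=
  ∀ s, TrN (T.Pr s) ↔ T.Prv s

end TheoryOn

/-- If `T` is consistent and some Σ₃ sentence `σ` is `T`-provable
but false in ℕ, then `T` has a false Gödelian sentence of complexity Σ₃. -/
theorem false_sigma3_godelian (L : PropLang) (TrN : L.Sent → Prop)
    (hTrN : L.IsValuation TrN) (T : TheoryOn L)
    (hLog : T.ClosedUnderLogic) (hHBL : T.HBL) (hCons : T.Consistent)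
    (Pi1 Sigma3 : L.Sent → Prop)
    (hConjSigma3 : ∀ a b, Sigma3 a → Pi1 b → Sigma3 (L.conj a b))
    (hDiag : ∃ γ₀, T.Godelian γ₀ ∧ Pi1 γ₀)
    (σ : L.Sent) (hσSigma3 : Sigma3 σ) (hσProv : T.Prv σ) (hσFalse : ¬ TrN σ) :
    ∃ γ, T.Godelian γ ∧ Sigma3 γ ∧ ¬ TrN γ := by
  obtain ⟨γ₀, hG0, hPi⟩ := hDiag
  obtain ⟨htaut, hmp⟩ := hLog
  obtain ⟨hbl1, hbl2, _⟩ := hHBL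
  set γ := L.conj σ γ₀ with hγ
  -- monotonicity of Pr
  have mono : ∀ a b, T.Prv (L.imp a b) → T.Prv (L.imp (T.Pr a) (T.Pr b)) := by
    intro a b h
    exact hmp _ _ (hbl2 a b) (hbl1 _ h)
  have h1 : T.Prv (L.imp γ₀ γ) := by
    have t : L.Taut (L.imp σ (L.imp γ₀ γ)) := by
      intro v hv
      obtain ⟨_, _, hi, hc, _, _⟩ := hv
      simp only [hi, hc, hγ]; tauto
    exact hmp _ _ (htaut _ t) hσProv
  have h2 : T.Prv (L.imp γ γ₀) := by
    apply htaut
    intro v hv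
    obtain ⟨_, _, hi, hc, _, _⟩ := hv
    simp only [hi, hc, hγ]; tauto
  have h3 := mono _ _ h1
  have h4 := mono _ _ h2
  have big : L.Taut (L.imp (L.imp γ γ₀) (L.imp (L.imp γ₀ γ)
      (L.imp (L.imp (T.Pr γ₀) (T.Pr γ)) (L.imp (L.imp (T.Pr γ) (T.Pr γ₀))
      (L.imp (L.iffS γ₀ (L.neg (T.Pr γ₀))) (L.iffS γ (L.neg (T.Pr γ)))))))) := by
    intro v hv
    obtain ⟨_, hn, hi, _, _, hif⟩ := hv
    simp only [hi, hif, hn]; tauto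
  have hGod : T.Godelian γ :=
    hmp _ _ (hmp _ _ (hmp _ _ (hmp _ _ (hmp _ _ (htaut _ big) h2) h1) h3) h4) hG0
  refine ⟨γ, hGod, hConjSigma3 _ _ hσSigma3 hPi, ?_⟩
  obtain ⟨_, _, _, hc, _, _⟩ := hTrN
  rw [hc]; tauto
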